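/- Identity III: Under the elementary-system hypotheses, if moreover C_v is a constant function on D, then at every point of D one has k·(∂α/∂S) = α·(∂k/∂S) (equivalently, (∂α/∂k)_V = α/k wherever this makes sense). -/

import Mathlib

/-- Partial derivative `∂f/∂x¹` (first coordinate) of a function on `ℝ²`. -/
noncomputable def pS (f : ℝ × ℝ → ℝ) (x : ℝ × ℝ) : ℝ := fderiv ℝ f x (1, 0)

/-- Partial derivative `∂f/∂x²` (second coordinate) of a function on `ℝ²`. -/
noncomputable def pV (f : ℝ × ℝ → ℝ) (x : ℝ × ℝ) : ℝ := fderiv ℝ f x (0, 1)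

/-- Hessian metric entry `η₁₁ = ∂²E/∂x¹∂x¹`. -/
noncomputable def e11 (E : ℝ × ℝ → ℝ) : ℝ × ℝ → ℝ := pS (pS E)

/-- Hessian metric entry `η₁₂ = ∂²E/∂x¹∂x²`. -/
noncomputable def e12 (E : ℝ × ℝ → ℝ) : ℝ × ℝ → ℝ := pV (pS E)

/-- Hessian metric entry `η₂₂ = ∂²E/∂x²∂x²`. -/
noncomputable def e22 (E : ℝ × ℝ → ℝ) : ℝ × ℝ → ℝ := pV (pV E)

/-- Determinant `det η = η₁₁η₂₂ − η₁₂²` of the Hessian metric of `E`. -/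
noncomputable def detHess (E : ℝ × ℝ → ℝ) (x : ℝ × ℝ) : ℝ :=
  e11 E x * e22 E x - (e12 E x) ^ 2

/-- Determinant of the 3×3 matrix `M` with rows `(η₁₁, ∂₁η₁₁, ∂₂η₁₁)`,
`(η₁₂, ∂₁η₁₂, ∂₂η₁₂)`, `(η₂₂, ∂₁η₂₂, ∂₂η₂₂)`. -/
noncomputable def detM (E : ℝ × ℝ → ℝ) (x : ℝ × ℝ) : ℝ :=
  Matrix.det !![e11 E x, pS (e11 E) x, pV (e11 E) x;
                e12 E x, pS (e12 E) x, pV (e12 E) x;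
                e22 E x, pS (e22 E) x, pV (e22 E) x]

/-- Scalar curvature `R = −(1/(4(det η)²))·det M` of the Hessian metric of `E`. -/
noncomputable def scalarCurv (E : ℝ × ℝ → ℝ) (x : ℝ × ℝ) : ℝ :=
  -(1 / (4 * (detHess E x) ^ 2)) * detM E x

lemma htop1 : ((⊤:ℕ∞) : WithTop ℕ∞) + 1 ≤ ((⊤:ℕ∞) : WithTop ℕ∞) := by
  rw [show ((1:WithTop ℕ∞)) = ((1:ℕ∞):WithTop ℕ∞) from rfl, ← WithTop.coe_add]
  exact WithTop.coe_le_coe.2 le_top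

lemma h2top : (2 : WithTop ℕ∞) ≤ ((⊤:ℕ∞) : WithTop ℕ∞) := WithTop.coe_le_coe.2 le_top

lemma h1top : (1 : WithTop ℕ∞) ≤ ((⊤:ℕ∞) : WithTop ℕ∞) := WithTop.coe_le_coe.2 le_top

lemma contDiffOn_pS' {f : ℝ × ℝ → ℝ} {D : Set (ℝ × ℝ)} (hD : IsOpen D)
    (hf : ContDiffOn ℝ (⊤ : ℕ∞) f D) : ContDiffOn ℝ (⊤ : ℕ∞) (pS f) D := by
  have h1 : ContDiffOn ℝ (⊤ : ℕ∞) (fderiv ℝ f) D := hf.fderiv_of_isOpen hD htop1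
  exact h1.clm_apply contDiffOn_const

lemma contDiffOn_pV' {f : ℝ × ℝ → ℝ} {D : Set (ℝ × ℝ)} (hD : IsOpen D)
    (hf : ContDiffOn ℝ (⊤ : ℕ∞) f D) : ContDiffOn ℝ (⊤ : ℕ∞) (pV f) D := by
  have h1 : ContDiffOn ℝ (⊤ : ℕ∞) (fderiv ℝ f) D := hf.fderiv_of_isOpen hD htop1
  exact h1.clm_apply contDiffOn_const

lemma fd_congr' {f g : ℝ × ℝ → ℝ} {D : Set (ℝ × ℝ)} {x : ℝ × ℝ} (hD : IsOpen D) (hx : x ∈ D)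
    (h : ∀ y ∈ D, f y = g y) : fderiv ℝ f x = fderiv ℝ g x :=
  Filter.EventuallyEq.fderiv_eq (by filter_upwards [hD.mem_nhds hx] using h)

lemma fd_mul' {f g : ℝ × ℝ → ℝ} {x v : ℝ × ℝ} (hf : DifferentiableAt ℝ f x)
    (hg : DifferentiableAt ℝ g x) :
    fderiv ℝ (fun y => f y * g y) x v = fderiv ℝ f x v * g x + f x * fderiv ℝ g x v := by
  rw [fderiv_fun_mul hf hg]; simp; ring

lemma fd_const_mul' {g : ℝ × ℝ → ℝ} {x v : ℝ × ℝ} (c : ℝ) (hg : DifferentiableAt ℝ g x) :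
    fderiv ℝ (fun y => c * g y) x v = c * fderiv ℝ g x v := by
  rw [fderiv_const_mul hg]; simp

lemma fd_neg' {g : ℝ × ℝ → ℝ} {x v : ℝ × ℝ} :
    fderiv ℝ (fun y => -(g y)) x v = -(fderiv ℝ g x v) := by
  rw [fderiv_fun_neg]; simp

/-- Schwarz symmetry of second partials for a smooth function on an open set. -/
lemma schwarz' {f : ℝ × ℝ → ℝ} {D : Set (ℝ × ℝ)} {x : ℝ × ℝ} (hD : IsOpen D) (hx : x ∈ D)
    (hf : ContDiffOn ℝ (⊤ : ℕ∞) f D) : pS (pV f) x = pV (pS f) x := by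
  have hat : ContDiffAt ℝ (⊤ : ℕ∞) f x := hf.contDiffAt (hD.mem_nhds hx)
  have hsym : IsSymmSndFDerivAt ℝ f x := hat.isSymmSndFDerivAt (by simpa [minSmoothness_of_isRCLikeNormedField] using h2top)
  have hdf : DifferentiableAt ℝ (fderiv ℝ f) x :=
    ((hf.fderiv_of_isOpen hD htop1).contDiffAt (hD.mem_nhds hx)).differentiableAt (by simp)
  have h1 : ∀ v w : ℝ × ℝ, fderiv ℝ (fun y => fderiv ℝ f y v) x w
      = fderiv ℝ (fderiv ℝ f) x w v := by
    intro v w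
    rw [fderiv_clm_apply hdf (differentiableAt_const v)]
    simp
  unfold pS pV
  rw [h1, h1, hsym.eq]

/-- Identity III: for an elementary thermodynamical system (hypotheses as in Identity I) in
which `C_v` is constant on `D`, one has `k·∂α/∂S = α·∂k/∂S` on `D`
(i.e. `(∂α/∂k)_V = α/k` wherever this makes sense). -/
theorem identity_III
    (D : Set (ℝ × ℝ)) (hD : IsOpen D) (hDV : ∀ x ∈ D, 0 < x.2)
    (U Cv α k : ℝ × ℝ → ℝ)
    (hU : ContDiffOn ℝ (⊤ : ℕ∞) U D)
    (hCv : ContDiffOn ℝ (⊤ : ℕ∞) Cv D)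
    (hα : ContDiffOn ℝ (⊤ : ℕ∞) α D)
    (hk : ContDiffOn ℝ (⊤ : ℕ∞) k D)
    (hT0 : ∀ x ∈ D, pS U x ≠ 0)
    (hCv0 : ∀ x ∈ D, Cv x ≠ 0)
    (hk0 : ∀ x ∈ D, k x ≠ 0)
    (h11 : ∀ x ∈ D, e11 U x = pS U x / Cv x)
    (h12 : ∀ x ∈ D, e12 U x = -(pS U x * α x) / (k x * Cv x))
    (h22 : ∀ x ∈ D,
      e22 U x = (Cv x + x.2 * pS U x * α x ^ 2 / k x) / (x.2 * k x * Cv x))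
    (cv : ℝ) (hconst : ∀ x ∈ D, Cv x = cv) :
    ∀ x ∈ D, k x * pS α x = α x * pS k x := by
  intro x hx
  have hcv : Cv x = cv := hconst x hx
  have hcv0 : cv ≠ 0 := hcv ▸ hCv0 x hx
  have hkx : k x ≠ 0 := hk0 x hx
  have hTx : pS U x ≠ 0 := hT0 x hx
  -- smoothness of first and second partials
  have hgD : ContDiffOn ℝ (⊤ : ℕ∞) (pS U) D := contDiffOn_pS' hD hU
  have he11D : ContDiffOn ℝ (⊤ : ℕ∞) (e11 U) D := contDiffOn_pS' hD hgD
  have he12D : ContDiffOn ℝ (⊤ : ℕ∞) (e12 U) D := contDiffOn_pV' hD hgD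
  have dAt : ∀ {f : ℝ × ℝ → ℝ}, ContDiffOn ℝ (⊤ : ℕ∞) f D → DifferentiableAt ℝ f x :=
    fun h => (h.contDiffAt (hD.mem_nhds hx)).differentiableAt (by simp)
  -- pointwise algebraic relations
  have hE1 : cv * e11 U x = pS U x := by
    rw [h11 x hx, hcv]; field_simp
  have hE2 : k x * cv * e12 U x = -(pS U x * α x) := by
    rw [h12 x hx, hcv]; field_simp
  -- ∂_V of the first relation
  have hE3 : cv * pV (e11 U) x = e12 U x := by
    have heq : ∀ y ∈ D, cv * e11 U y = pS U y := by
      intro y hy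
      rw [h11 y hy, hconst y hy]; field_simp
    calc cv * pV (e11 U) x = pV (fun y => cv * e11 U y) x := by
          unfold pV; rw [fd_const_mul' cv (dAt he11D)]
      _ = pV (pS U) x := by unfold pV; rw [fd_congr' hD hx heq]
      _ = e12 U x := rfl
  -- ∂_S of the second relation
  have hE4 : cv * (pS k x * e12 U x + k x * pS (e12 U) x)
      = -(e11 U x * α x + pS U x * pS α x) := by
    have heq : ∀ y ∈ D, cv * (k y * e12 U y) = -(pS U y * α y) := by
      intro y hy
      rw [h12 y hy, hconst y hy]; field_simp [hk0 y hy]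
    have hL : pS (fun y => cv * (k y * e12 U y)) x
        = cv * (pS k x * e12 U x + k x * pS (e12 U) x) := by
      unfold pS
      rw [fd_const_mul' (g := fun y => k y * e12 U y) cv ((dAt hk).mul (dAt he12D)),
        fd_mul' (dAt hk) (dAt he12D)]
    have hR : pS (fun y => -(pS U y * α y)) x
        = -(e11 U x * α x + pS U x * pS α x) := by
      calc pS (fun y => -(pS U y * α y)) x
          = -(fderiv ℝ (fun y => pS U y * α y) x (1, 0)) := fd_neg'
        _ = -(e11 U x * α x + pS U x * pS α x) := by
            rw [fd_mul' (dAt hgD) (dAt hα)]; rfl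
    rw [← hL, ← hR]
    unfold pS
    exact congrFun (congrArg _ (fd_congr' hD hx heq)) _
  -- Schwarz symmetry
  have hE5 : pS (e12 U) x = pV (e11 U) x := schwarz' hD hx hgD
  have hE3' : cv * pS (e12 U) x = e12 U x := by rw [hE5]; exact hE3
  -- combine everything
  have key : cv * pS U x * (k x * pS α x - α x * pS k x) = 0 := by
    linear_combination (k x * cv) * hE4 - (cv * pS k x + k x) * hE2
      - (α x * k x) * hE1 - (k x ^ 2 * cv) * hE3'
  have h0 : k x * pS α x - α x * pS k x = 0 := by
    rcases mul_eq_zero.1 key with h | h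
    · exact absurd h (mul_ne_zero hcv0 hTx)
    · exact h
  linarith
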